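/- Let M = ([n], 𝓘) be a matroid with rank r, and let I* be the output of the greedy algorithm with positive weights w (processing elements in nonincreasing weight order with fixed tie-breaking, adding each element that preserves independence). Then |I*| = r and ∑_{i ∈ I*} w(i) = max over I ∈ 𝓘 of ∑_{i ∈ I} w(i). -/

import Mathlib

open Finset
open scoped Classical

variable {n : ℕ}

/-- The list of indices sorted in nonincreasing order of weight,
breaking ties in favor of lower indices. -/
noncomputable def sortedList (n : ℕ) (w : Fin n → ℝ) : List (Fin n) :=
  (List.finRange n).mergeSort (fun a b => decide (w b < w a ∨ (w a = w b ∧ a ≤ b)))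

/-- Greedy: process the list in order, adding an element whenever independence is kept. -/
noncomputable def greedyAux (Indep : Finset (Fin n) → Prop) :
    List (Fin n) → Finset (Fin n) → Finset (Fin n)
  | [], I => I
  | a :: l, I => greedyAux Indep l (if Indep (insert a I) then insert a I else I)

/-- The greedy algorithm on a matroid with weights `w`. -/
noncomputable def greedy (Indep : Finset (Fin n) → Prop) (w : Fin n → ℝ) : Finset (Fin n) :=
  greedyAux Indep (sortedList n w) ∅

/-- The matroid rank function. -/
noncomputable def rank (Indep : Finset (Fin n) → Prop) (S : Finset (Fin n)) : ℕ :=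
  (S.powerset.filter Indep).sup Finset.card

/- ------------------ auxiliary lemmas ------------------ -/

lemma subset_greedyAux (Indep : Finset (Fin n) → Prop) (l : List (Fin n)) :
    ∀ I : Finset (Fin n), I ⊆ greedyAux Indep l I := by
  induction l with
  | nil => intro I; rw [greedyAux]
  | cons a l ih =>
    intro I
    rw [greedyAux]
    split
    · exact (Finset.subset_insert a I).trans (ih _)
    · exact ih I

lemma greedyAux_subset (Indep : Finset (Fin n) → Prop) (l : List (Fin n)) :
    ∀ I : Finset (Fin n), greedyAux Indep l I ⊆ I ∪ l.toFinset := by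
  induction l with
  | nil => intro I; rw [greedyAux]; simp
  | cons a l ih =>
    intro I
    rw [greedyAux]
    split
    · refine (ih _).trans ?_
      intro x hx
      simp only [Finset.mem_union, Finset.mem_insert, List.toFinset_cons,
        List.mem_toFinset] at hx ⊢
      tauto
    · refine (ih _).trans ?_
      intro x hx
      simp only [Finset.mem_union, List.toFinset_cons, Finset.mem_insert,
        List.mem_toFinset] at hx ⊢
      tauto

lemma indep_greedyAux (Indep : Finset (Fin n) → Prop) (l : List (Fin n)) :
    ∀ I : Finset (Fin n), Indep I → Indep (greedyAux Indep l I) := by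
  induction l with
  | nil => intro I h; rw [greedyAux]; exact h
  | cons a l ih =>
    intro I h
    rw [greedyAux]
    split
    · exact ih _ ‹_›
    · exact ih _ h

lemma greedyAux_maximal {Indep : Finset (Fin n) → Prop}
    (hDown : ∀ A B : Finset (Fin n), A ⊆ B → Indep B → Indep A) (l : List (Fin n)) :
    ∀ I : Finset (Fin n), ∀ a ∈ l, a ∉ greedyAux Indep l I →
      ¬ Indep (insert a (greedyAux Indep l I)) := by
  induction l with
  | nil => simp
  | cons b l ih =>
    intro I a ha hnot
    rw [greedyAux] at hnot ⊢
    by_cases h : Indep (insert b I)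
    · rw [if_pos h] at hnot ⊢
      rcases List.mem_cons.1 ha with rfl | ha'
      · exact absurd (subset_greedyAux Indep l _ (Finset.mem_insert_self a I)) hnot
      · exact ih _ a ha' hnot
    · rw [if_neg h] at hnot ⊢
      rcases List.mem_cons.1 ha with rfl | ha'
      · intro hins
        exact h (hDown _ _ (Finset.insert_subset_insert _ (subset_greedyAux Indep l I)) hins)
      · exact ih _ a ha' hnot

lemma greedyAux_append (Indep : Finset (Fin n) → Prop) (p s : List (Fin n)) :
    ∀ I : Finset (Fin n),
      greedyAux Indep (p ++ s) I = greedyAux Indep s (greedyAux Indep p I) := by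
  induction p with
  | nil => intro I; rw [List.nil_append, greedyAux]
  | cons a p ih =>
    intro I
    rw [List.cons_append, greedyAux, greedyAux]
    exact ih _

/-- Abel-summation style inequality. -/
lemma abel_le (w : Fin n → ℝ) :
    ∀ l : List (Fin n), l.Nodup → l.Pairwise (fun a b => w b ≤ w a) →
    ∀ A B : Finset (Fin n), A ⊆ l.toFinset → B ⊆ l.toFinset →
    (∀ p : List (Fin n), p <+: l → (B ∩ p.toFinset).card ≤ (A ∩ p.toFinset).card) →
    ∀ c : ℝ, 0 ≤ c → (∀ b ∈ l, c ≤ w b) →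
    ∑ j ∈ B, w j + (A.card : ℝ) * c ≤ ∑ j ∈ A, w j + (B.card : ℝ) * c := by
  intro l
  induction l using List.reverseRecOn with
  | nil =>
    intro _ _ A B hA hB _ c _ _
    simp only [List.toFinset_nil, Finset.subset_empty] at hA hB
    subst hA; subst hB
    simp
  | append_singleton l a ih =>
    intro hnd hp A B hA hB hpre c hc hcle
    have hna : a ∉ l := by
      simp [List.nodup_append] at hnd; tauto
    have hnd' : l.Nodup := (List.nodup_append.1 hnd).1
    have hpl : l.Pairwise (fun a b => w b ≤ w a) := (List.pairwise_append.1 hp).1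
    have hwa : ∀ x ∈ l, w a ≤ w x := by
      intro x hx
      exact (List.pairwise_append.1 hp).2.2 x hx a (by simp)
    have hca : c ≤ w a := hcle a (by simp)
    have htf : (l ++ [a]).toFinset = insert a l.toFinset := by
      ext x; simp [or_comm]
    -- restricted sets
    set A' := A.erase a with hA'def
    set B' := B.erase a with hB'def
    have hA' : A' ⊆ l.toFinset := by
      intro x hx
      rcases Finset.mem_erase.1 hx with ⟨hxa, hxA⟩
      have := hA hxA
      rw [htf] at this
      rcases Finset.mem_insert.1 this with rfl | h
      · exact absurd rfl hxa
      · exact h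
    have hB' : B' ⊆ l.toFinset := by
      intro x hx
      rcases Finset.mem_erase.1 hx with ⟨hxa, hxB⟩
      have := hB hxB
      rw [htf] at this
      rcases Finset.mem_insert.1 this with rfl | h
      · exact absurd rfl hxa
      · exact h
    have hinterA : A ∩ l.toFinset = A' := by
      ext x
      simp only [Finset.mem_inter, List.mem_toFinset, hA'def, Finset.mem_erase]
      constructor
      · rintro ⟨hxA, hxl⟩; exact ⟨fun h => hna (h ▸ hxl), hxA⟩
      · rintro ⟨hxa, hxA⟩
        refine ⟨hxA, ?_⟩
        have := hA hxA
        rw [htf] at this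
        rcases Finset.mem_insert.1 this with rfl | h
        · exact absurd rfl hxa
        · exact List.mem_toFinset.1 h
    have hinterB : B ∩ l.toFinset = B' := by
      ext x
      simp only [Finset.mem_inter, List.mem_toFinset, hB'def, Finset.mem_erase]
      constructor
      · rintro ⟨hxB, hxl⟩; exact ⟨fun h => hna (h ▸ hxl), hxB⟩
      · rintro ⟨hxa, hxB⟩
        refine ⟨hxB, ?_⟩
        have := hB hxB
        rw [htf] at this
        rcases Finset.mem_insert.1 this with rfl | h
        · exact absurd rfl hxa
        · exact List.mem_toFinset.1 h
    have hpre' : ∀ p : List (Fin n), p <+: l →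
        (B' ∩ p.toFinset).card ≤ (A' ∩ p.toFinset).card := by
      intro p hpfx
      have hap : a ∉ p.toFinset := by
        intro h
        exact hna (hpfx.subset (List.mem_toFinset.1 h))
      have e1 : A' ∩ p.toFinset = A ∩ p.toFinset := by
        ext x
        simp only [hA'def, Finset.mem_inter, Finset.mem_erase]
        constructor
        · rintro ⟨⟨_, h⟩, h2⟩; exact ⟨h, h2⟩
        · rintro ⟨h, h2⟩; exact ⟨⟨fun hxa => hap (hxa ▸ h2), h⟩, h2⟩
      have e2 : B' ∩ p.toFinset = B ∩ p.toFinset := by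
        ext x
        simp only [hB'def, Finset.mem_inter, Finset.mem_erase]
        constructor
        · rintro ⟨⟨_, h⟩, h2⟩; exact ⟨h, h2⟩
        · rintro ⟨h, h2⟩; exact ⟨⟨fun hxa => hap (hxa ▸ h2), h⟩, h2⟩
      rw [e1, e2]
      exact hpre p (hpfx.trans (List.prefix_append l [a]))
    have hwa0 : 0 ≤ w a := le_trans hc hca
    have IH := ih hnd' hpl A' B' hA' hB' hpre' (w a) hwa0 hwa
    -- |B'| ≤ |A'|
    have hq_le_p : (B'.card : ℝ) ≤ (A'.card : ℝ) := by
      have := hpre l (List.prefix_append l [a])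
      rw [hinterA, hinterB] at this
      exact_mod_cast this
    -- |B| ≤ |A|
    have hBA : B.card ≤ A.card := by
      have := hpre (l ++ [a]) (List.prefix_refl _)
      rwa [Finset.inter_eq_left.2 hA, Finset.inter_eq_left.2 hB] at this
    have hwc : 0 ≤ w a - c := by linarith
    by_cases haA : a ∈ A <;> by_cases haB : a ∈ B
    · -- a ∈ A, a ∈ B
      have e1 : ∑ j ∈ A, w j = w a + ∑ j ∈ A', w j := (Finset.add_sum_erase _ _ haA).symm
      have e2 : ∑ j ∈ B, w j = w a + ∑ j ∈ B', w j := (Finset.add_sum_erase _ _ haB).symm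
      have c1 : (A.card : ℝ) = (A'.card : ℝ) + 1 := by
        rw [hA'def]; exact_mod_cast (Finset.card_erase_add_one haA).symm
      have c2 : (B.card : ℝ) = (B'.card : ℝ) + 1 := by
        rw [hB'def]; exact_mod_cast (Finset.card_erase_add_one haB).symm
      rw [e1, e2, c1, c2]
      nlinarith [mul_nonneg (sub_nonneg.2 hq_le_p) hwc]
    · -- a ∈ A, a ∉ B
      have e1 : ∑ j ∈ A, w j = w a + ∑ j ∈ A', w j := (Finset.add_sum_erase _ _ haA).symm
      have e2 : B' = B := Finset.erase_eq_of_notMem haB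
      have c1 : (A.card : ℝ) = (A'.card : ℝ) + 1 := by
        rw [hA'def]; exact_mod_cast (Finset.card_erase_add_one haA).symm
      rw [e1, c1, ← e2]
      nlinarith [mul_nonneg (sub_nonneg.2 hq_le_p) hwc]
    · -- a ∉ A, a ∈ B
      have e1 : A' = A := Finset.erase_eq_of_notMem haA
      have e2 : ∑ j ∈ B, w j = w a + ∑ j ∈ B', w j := (Finset.add_sum_erase _ _ haB).symm
      have c2 : (B.card : ℝ) = (B'.card : ℝ) + 1 := by
        rw [hB'def]; exact_mod_cast (Finset.card_erase_add_one haB).symm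
      have hq1_le_p : (B'.card : ℝ) + 1 ≤ (A'.card : ℝ) := by
        rw [e1]
        have : (B.card : ℝ) ≤ (A.card : ℝ) := by exact_mod_cast hBA
        rw [c2] at this; linarith
      rw [e2, c2, ← e1]
      nlinarith [mul_nonneg (by linarith : (0:ℝ) ≤ (A'.card : ℝ) - (B'.card : ℝ) - 1) hwc]
    · -- a ∉ A, a ∉ B
      have e1 : A' = A := Finset.erase_eq_of_notMem haA
      have e2 : B' = B := Finset.erase_eq_of_notMem haB
      rw [← e1, ← e2]
      nlinarith [mul_nonneg (sub_nonneg.2 hq_le_p) hwc]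

/- properties of sortedList -/

lemma sortedList_perm (w : Fin n → ℝ) : (sortedList n w).Perm (List.finRange n) :=
  List.mergeSort_perm _ _

lemma sortedList_nodup (w : Fin n → ℝ) : (sortedList n w).Nodup :=
  (sortedList_perm w).nodup_iff.2 (List.nodup_finRange n)

lemma mem_sortedList (w : Fin n → ℝ) (a : Fin n) : a ∈ sortedList n w :=
  ((sortedList_perm w).mem_iff).2 (List.mem_finRange a)

lemma sortedList_toFinset (w : Fin n → ℝ) : (sortedList n w).toFinset = Finset.univ := by
  ext x; simp [mem_sortedList w x]

lemma sortedList_sorted (w : Fin n → ℝ) :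
    (sortedList n w).Pairwise (fun a b => w b ≤ w a) := by
  have htrans : ∀ a b c : Fin n,
      (fun a b => decide (w b < w a ∨ (w a = w b ∧ a ≤ b))) a b = true →
      (fun a b => decide (w b < w a ∨ (w a = w b ∧ a ≤ b))) b c = true →
      (fun a b => decide (w b < w a ∨ (w a = w b ∧ a ≤ b))) a c = true := by
    intro a b c hab hbc
    simp only [decide_eq_true_iff] at hab hbc ⊢
    rcases hab with h1 | ⟨h1, h1'⟩ <;> rcases hbc with h2 | ⟨h2, h2'⟩
    · exact Or.inl (h2.trans h1)
    · exact Or.inl (h2 ▸ h1)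
    · exact Or.inl (h1 ▸ h2)
    · exact Or.inr ⟨h1.trans h2, h1'.trans h2'⟩
  have htot : ∀ a b : Fin n,
      ((fun a b => decide (w b < w a ∨ (w a = w b ∧ a ≤ b))) a b ||
       (fun a b => decide (w b < w a ∨ (w a = w b ∧ a ≤ b))) b a) = true := by
    intro a b
    simp only [Bool.or_eq_true, decide_eq_true_iff]
    rcases lt_trichotomy (w a) (w b) with h | h | h
    · exact Or.inr (Or.inl h)
    · rcases le_total a b with h' | h'
      · exact Or.inl (Or.inr ⟨h, h'⟩)
      · exact Or.inr (Or.inr ⟨h.symm, h'⟩)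
    · exact Or.inl (Or.inl h)
  have := List.pairwise_mergeSort htrans htot (List.finRange n)
  refine this.imp ?_
  intro a b hab
  simp only [decide_eq_true_iff] at hab
  rcases hab with h | ⟨h, _⟩
  · exact h.le
  · exact h.ge

/- ------------------ main theorem ------------------ -/

theorem stmt_13 {n : ℕ} (Indep : Finset (Fin n) → Prop)
    (hEmpty : Indep ∅)
    (hDown : ∀ A B : Finset (Fin n), A ⊆ B → Indep B → Indep A)
    (hExch : ∀ A B : Finset (Fin n), Indep A → Indep B → A.card < B.card →
      ∃ x ∈ B, x ∉ A ∧ Indep (insert x A))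
    (w : Fin n → ℝ) (hw : ∀ j, 0 < w j) :
    Indep (greedy Indep w) ∧
    (greedy Indep w).card = rank Indep Finset.univ ∧
    ∀ I : Finset (Fin n), Indep I → ∑ j ∈ I, w j ≤ ∑ j ∈ greedy Indep w, w j := by
  set L := sortedList n w with hL
  set G := greedy Indep w with hG
  have hGdef : G = greedyAux Indep L ∅ := rfl
  have hGindep : Indep G := indep_greedyAux Indep L ∅ hEmpty
  have hGmax : ∀ a : Fin n, a ∉ G → ¬ Indep (insert a G) := fun a ha =>
    greedyAux_maximal hDown L ∅ a (mem_sortedList w a) ha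
  have hcardmax : ∀ I : Finset (Fin n), Indep I → I.card ≤ G.card := by
    intro I hI
    by_contra hlt
    push_neg at hlt
    obtain ⟨x, _, hxG, hxins⟩ := hExch G I hGindep hI hlt
    exact hGmax x hxG hxins
  refine ⟨hGindep, ?_, ?_⟩
  · -- card = rank
    apply le_antisymm
    · exact Finset.le_sup (Finset.mem_filter.2 ⟨Finset.mem_powerset.2 (Finset.subset_univ G),
        hGindep⟩)
    · apply Finset.sup_le
      intro I hI
      exact hcardmax I (Finset.mem_filter.1 hI).2
  · -- weight optimality
    intro I hI
    have hpre : ∀ p : List (Fin n), p <+: L →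
        (I ∩ p.toFinset).card ≤ (G ∩ p.toFinset).card := by
      intro p hpfx
      obtain ⟨s, hs⟩ := hpfx
      set Gp := greedyAux Indep p ∅ with hGp
      have hGpIndep : Indep Gp := indep_greedyAux Indep p ∅ hEmpty
      have hGpsub : Gp ⊆ p.toFinset := by
        have := greedyAux_subset Indep p ∅
        simpa using this
      have hGeq : G = greedyAux Indep s Gp := by
        rw [hGdef, ← hs, greedyAux_append]
      have hdisj : ∀ x ∈ s, x ∉ p := by
        have hnd := sortedList_nodup w
        rw [← hL, ← hs, List.nodup_append] at hnd
        intro x hx hxp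
        exact hnd.2.2 x hxp x hx rfl
      have hinter : G ∩ p.toFinset = Gp := by
        apply Finset.Subset.antisymm
        · intro x hx
          rcases Finset.mem_inter.1 hx with ⟨hxG, hxp⟩
          have := greedyAux_subset Indep s Gp (hGeq ▸ hxG)
          rcases Finset.mem_union.1 this with h | h
          · exact h
          · exact absurd (List.mem_toFinset.1 hxp) (hdisj x (List.mem_toFinset.1 h))
        · intro x hx
          exact Finset.mem_inter.2 ⟨hGeq ▸ subset_greedyAux Indep s Gp hx, hGpsub hx⟩
      rw [hinter]
      by_contra hlt
      push_neg at hlt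
      obtain ⟨x, hxI, hxGp, hxins⟩ :=
        hExch Gp (I ∩ p.toFinset) hGpIndep (hDown _ I Finset.inter_subset_left hI) hlt
      have hxp : x ∈ p := List.mem_toFinset.1 (Finset.mem_inter.1 hxI).2
      exact greedyAux_maximal hDown p ∅ x hxp hxGp hxins
    have := abel_le w L (sortedList_nodup w) (sortedList_sorted w) G I
      (by rw [hL, sortedList_toFinset]; exact Finset.subset_univ G)
      (by rw [hL, sortedList_toFinset]; exact Finset.subset_univ I)
      hpre 0 le_rfl (fun b _ => (hw b).le)
    simpa using this
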